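/- Let G be a hyperbolic group with a fixed finite generating set whose Cayley graph is δ-hyperbolic, and let H, J be infinite quasiconvex subgroups of G. Then for all a, b ∈ G: if the coset aH is coarsely contained in the coset bJ (i.e. aH ⊆ N_R(bJ) for some R ≥ 0), then the intersection aHa^{-1} ∩ bJb^{-1} is infinite. -/

import Mathlib

universe u

open SimpleGraph Pointwise

/-- The Cayley graph of a group `G` with respect to a generating set `S`
(made symmetric). -/
def cayley (G : Type u) [Group G] (S : Set G) : SimpleGraph G where
  Adj x y := x ≠ y ∧ (x⁻¹ * y ∈ S ∨ y⁻¹ * x ∈ S)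
  symm := ⟨fun _ _ h => ⟨h.1.symm, h.2.symm⟩⟩
  loopless := ⟨fun _ h => h.1 rfl⟩

/-- `δ`-hyperbolicity of a graph via `δ`-slim geodesic triangles
(geodesics being shortest-path walks). -/
def GraphHyperbolic {V : Type u} (G : SimpleGraph V) (δ : ℝ) : Prop :=
  ∀ (x y z : V) (p : G.Walk x y) (q : G.Walk y z) (r : G.Walk x z),
    p.length = G.dist x y → q.length = G.dist y z → r.length = G.dist x z →
    ∀ v ∈ r.support, ∃ w, (w ∈ p.support ∨ w ∈ q.support) ∧ (G.dist v w : ℝ) ≤ δ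

/-- `Y` is a `K`-quasiconvex subset of the graph `Γ`: every geodesic walk with
endpoints in `Y` stays in the closed `K`-neighborhood of `Y`. -/
def GraphQuasiconvex {V : Type u} (Γ : SimpleGraph V) (K : ℝ) (Y : Set V) : Prop :=
  ∀ a ∈ Y, ∀ b ∈ Y, ∀ p : Γ.Walk a b, p.length = Γ.dist a b →
    ∀ z ∈ p.support, ∃ w ∈ Y, (Γ.dist z w : ℝ) ≤ K

/-- Closest-point projection (in the graph metric of `G`) of the vertex `x` to `W`. -/
def gProjSet {V : Type u} (G : SimpleGraph V) (W : Set V) (x : V) : Set V :=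
  {w ∈ W | ∀ w' ∈ W, G.dist x w ≤ G.dist x w'}

/-- Closest-point projection (in the graph metric of `G`) of the set `S` to `W`. -/
def gProjSetOf {V : Type u} (G : SimpleGraph V) (W S : Set V) : Set V :=
  ⋃ s ∈ S, gProjSet G W s

/-- The Hausdorff distance between `S` and `T` in the graph metric of `G` is at most `d`. -/
def GHausBound {V : Type u} (G : SimpleGraph V) (d : ℝ) (S T : Set V) : Prop :=
  (∀ s ∈ S, ∃ t ∈ T, (G.dist s t : ℝ) ≤ d) ∧
  (∀ t ∈ T, ∃ s ∈ S, (G.dist t s : ℝ) ≤ d)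

section aux
variable {G : Type u} [Group G] {S : Set G}

lemma cayley_adj_mul (c : G) {x y : G} (h : (cayley G S).Adj x y) :
    (cayley G S).Adj (c * x) (c * y) := by
  obtain ⟨hne, hs⟩ := h
  refine ⟨by simpa using hne, ?_⟩
  simpa [mul_assoc, mul_inv_rev] using hs

lemma cayley_reachable_mul (c : G) {x y : G} (h : (cayley G S).Reachable x y) :
    (cayley G S).Reachable (c * x) (c * y) := by
  obtain ⟨p⟩ := h
  induction p with
  | nil => exact Reachable.refl _
  | cons h p ih => exact (cayley_adj_mul c h).reachable.trans ih

lemma cayley_reachable (hS : Subgroup.closure S = ⊤) (x y : G) :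
    (cayley G S).Reachable x y := by
  have key : ∀ g : G, (cayley G S).Reachable 1 g := by
    intro g
    have hg : g ∈ Subgroup.closure S := hS ▸ Subgroup.mem_top g
    induction hg using Subgroup.closure_induction with
    | mem s hs =>
      rcases eq_or_ne (1 : G) s with h | h
      · exact h ▸ Reachable.refl _
      · exact SimpleGraph.Adj.reachable ⟨h, Or.inl (by simpa using hs)⟩
    | one => exact Reachable.refl _
    | mul x y hx hy rx ry =>
      exact rx.trans (by simpa using cayley_reachable_mul x ry)
    | inv x hx rx =>
      have := cayley_reachable_mul x⁻¹ rx
      simp only [mul_one, inv_mul_cancel] at this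
      exact this.symm
  exact ((key x).symm.trans (key y))

lemma cayley_walk_mem {x y : G} (p : (cayley G S).Walk x y) :
    x⁻¹ * y ∈ (S ∪ S⁻¹) ^ p.length := by
  induction p with
  | nil => simp [Set.mem_one]
  | @cons x z y h p ih =>
    have hx : x⁻¹ * z ∈ S ∪ S⁻¹ := by
      rcases h.2 with h' | h'
      · exact Or.inl h'
      · exact Or.inr (by simpa [Set.mem_inv, mul_inv_rev] using h')
    have heq : x⁻¹ * y = (x⁻¹ * z) * (z⁻¹ * y) := by group
    rw [SimpleGraph.Walk.length_cons, pow_succ']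
    exact heq ▸ Set.mul_mem_mul hx ih

lemma set_pow_finite {T : Set G} (hT : T.Finite) (n : ℕ) : (T ^ n).Finite := by
  induction n with
  | zero => simpa [pow_zero] using Set.finite_one
  | succ n ih => rw [pow_succ]; exact ih.mul hT

end aux

/-- Lemma 5.12: if the coset `aH` is coarsely contained in the
coset `bJ`, then `aHa⁻¹ ∩ bJb⁻¹` is infinite. -/
theorem coarse_inclusion_infinite_intersection : ∀ δ K : ℝ, 0 < δ → 0 ≤ K →
    ∀ (G : Type u) [Group G] (S : Set G), S.Finite → Subgroup.closure S = ⊤ →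
      GraphHyperbolic (cayley G S) δ →
      ∀ H J : Subgroup G,
        (H : Set G).Infinite → (J : Set G).Infinite →
        GraphQuasiconvex (cayley G S) K (H : Set G) →
        GraphQuasiconvex (cayley G S) K (J : Set G) →
        ∀ a b : G,
          (∃ R : ℝ, 0 ≤ R ∧ ∀ u ∈ a • (H : Set G), ∃ v ∈ b • (J : Set G),
            ((cayley G S).dist u v : ℝ) ≤ R) →
          Set.Infinite (((fun h => a * h * a⁻¹) '' (H : Set G)) ∩
            ((fun j => b * j * b⁻¹) '' (J : Set G))) := by
  classical
  intro δ K hδ hK G _ S hSfin hSgen _ H J hHinf hJinf _ _ a b hRex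
  obtain ⟨R, hR0, hR⟩ := hRex
  set n := ⌈R⌉₊ with hn
  set T := S ∪ S⁻¹ with hT
  set B : Set G := ⋃ k ∈ Finset.range (n + 1), T ^ k with hB
  have hTfin : T.Finite := hSfin.union hSfin.inv
  have hBfin : B.Finite :=
    Set.Finite.biUnion (Finset.finite_toSet _) (fun k _ => set_pow_finite hTfin k)
  have hmem : ∀ h : ↥(H : Set G), a * (h : G) ∈ a • (H : Set G) := by
    intro h
    exact Set.smul_mem_smul_set h.2
  have spec : ∀ h : ↥(H : Set G), ∃ v ∈ b • (J : Set G),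
      ((cayley G S).dist (a * (h : G)) v : ℝ) ≤ R := fun h => hR _ (hmem h)
  let v : ↥(H : Set G) → G := fun h => (spec h).choose
  have hvJ : ∀ h, v h ∈ b • (J : Set G) := fun h => (spec h).choose_spec.1
  have hvd : ∀ h : ↥(H : Set G), ((cayley G S).dist (a * h.1) (v h) : ℝ) ≤ R :=
    fun h => (spec h).choose_spec.2
  have hφB : ∀ h : ↥(H : Set G), (a * (h : G))⁻¹ * v h ∈ B := by
    intro h
    obtain ⟨p, hp⟩ :=
      (cayley_reachable hSgen (a * (h : G)) (v h)).exists_walk_length_eq_dist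
    have hd : (cayley G S).dist (a * (h : G)) (v h) ≤ n := by
      exact_mod_cast le_trans (hvd h) (Nat.le_ceil R)
    have hlen : p.length ≤ n := hp ▸ hd
    exact Set.mem_biUnion (Finset.mem_range.mpr (Nat.lt_succ_of_le hlen))
      (cayley_walk_mem p)
  haveI : Infinite ↥(H : Set G) := hHinf.to_subtype
  haveI : Finite ↥B := hBfin
  let φ : ↥(H : Set G) → ↥B := fun h => ⟨(a * (h : G))⁻¹ * v h, hφB h⟩
  obtain ⟨g, hg⟩ := Finite.exists_infinite_fiber φ
  haveI := hg
  let h0 : ↥(φ ⁻¹' {g}) := Classical.arbitrary _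
  have hval : ∀ x : ↥(φ ⁻¹' {g}), v x.1 = a * (x.1 : G) * (g : G) := by
    intro x
    have hx : φ x.1 = g := x.2
    have hx' : (a * (x.1 : G))⁻¹ * v x.1 = (g : G) := congrArg Subtype.val hx
    calc v x.1 = (a * (x.1 : G)) * ((a * (x.1 : G))⁻¹ * v x.1) := by group
    _ = a * (x.1 : G) * (g : G) := by rw [hx']
  refine Set.infinite_of_injective_forall_mem
    (f := fun x : ↥(φ ⁻¹' {g}) => a * ((x.1 : G) * (h0.1 : G)⁻¹) * a⁻¹) ?_ ?_
  · intro x y hxy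
    have h2 : (x.1 : G) * (h0.1 : G)⁻¹ = (y.1 : G) * (h0.1 : G)⁻¹ :=
      mul_left_cancel (mul_right_cancel hxy)
    have h3 : (x.1 : G) = (y.1 : G) := mul_right_cancel h2
    exact Subtype.ext (Subtype.ext h3)
  · intro x
    constructor
    · exact ⟨(x.1 : G) * (h0.1 : G)⁻¹, mul_mem x.1.2 (inv_mem h0.1.2), rfl⟩
    · obtain ⟨jx, hjxJ, hjx⟩ := Set.mem_smul_set.1 (hvJ x.1)
      obtain ⟨j0, hj0J, hj0⟩ := Set.mem_smul_set.1 (hvJ h0.1)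
      rw [smul_eq_mul] at hjx hj0
      have e1 : b * jx = a * (x.1 : G) * (g : G) := hjx.trans (hval x)
      have e0 : b * j0 = a * (h0.1 : G) * (g : G) := hj0.trans (hval h0)
      refine ⟨jx * j0⁻¹, mul_mem hjxJ (inv_mem hj0J), ?_⟩
      show b * (jx * j0⁻¹) * b⁻¹ = a * ((x.1 : G) * (h0.1 : G)⁻¹) * a⁻¹
      have key : b * (jx * j0⁻¹) * b⁻¹ = (b * jx) * (b * j0)⁻¹ := by group
      rw [key, e1, e0]
      group
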